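/- No-programming theorem: let G be a unitary complex matrix on ℂ^D ⊗ ℂ^P. Suppose there are unit vectors p, q ∈ ℂ^P (program states), unit vectors p', q' ∈ ℂ^P, and unitary D×D matrices U_p, U_q such that G(d ⊗ p) = (U_p d) ⊗ p' and G(d ⊗ q) = (U_q d) ⊗ q' for every d ∈ ℂ^D. If U_qᴴ·U_p is not a complex scalar multiple of the identity matrix, then ⟨q, p⟩ = 0; that is, program states implementing unitary transformations that differ by more than a global phase are necessarily orthogonal. -/
import Mathlib

open Matrix

lemma tensor_sum_factor {D P : ℕ} (a c : Fin D → ℂ) (b e : Fin P → ℂ) :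
    ∑ x : Fin D × Fin P, star (a x.1 * b x.2) * (c x.1 * e x.2)
      = (∑ i, star (a i) * c i) * (∑ n, star (b n) * e n) := by
  rw [Fintype.sum_prod_type, Finset.sum_mul_sum]
  apply Finset.sum_congr rfl
  intro i _
  apply Finset.sum_congr rfl
  intro n _
  simp [star_mul']
  ring

theorem no_programming
    (D P : ℕ)
    (G : Matrix (Fin D × Fin P) (Fin D × Fin P) ℂ)
    (hG : G ∈ Matrix.unitaryGroup (Fin D × Fin P) ℂ)
    (p q p' q' : Fin P → ℂ)
    (hp : ∑ n, star (p n) * p n = 1) (hq : ∑ n, star (q n) * q n = 1)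
    (hp' : ∑ n, star (p' n) * p' n = 1) (hq' : ∑ n, star (q' n) * q' n = 1)
    (Up Uq : Matrix (Fin D) (Fin D) ℂ)
    (hUp : Up ∈ Matrix.unitaryGroup (Fin D) ℂ)
    (hUq : Uq ∈ Matrix.unitaryGroup (Fin D) ℂ)
    (hGp : ∀ d : Fin D → ℂ,
      G.mulVec (fun x => d x.1 * p x.2) = fun x => (Up.mulVec d) x.1 * p' x.2)
    (hGq : ∀ d : Fin D → ℂ,
      G.mulVec (fun x => d x.1 * q x.2) = fun x => (Uq.mulVec d) x.1 * q' x.2)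
    (hdiff : ¬ ∃ c : ℂ, Uqᴴ * Up = c • (1 : Matrix (Fin D) (Fin D) ℂ)) :
    ∑ n, star (q n) * p n = 0 := by
  classical
  have hGU : Gᴴ * G = 1 := by
    have := hG.1
    rwa [Matrix.star_eq_conjTranspose] at this
  have key : ∀ d e : Fin D → ℂ,
      (∑ i, star (d i) * e i) * (∑ n, star (q n) * p n)
        = (∑ i, star (Uq.mulVec d i) * (Up.mulVec e i)) * (∑ n, star (q' n) * p' n) := by
    intro d e
    have h1 : ∑ x : Fin D × Fin P,
        star (G.mulVec (fun x => d x.1 * q x.2) x) * (G.mulVec (fun x => e x.1 * p x.2) x)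
        = ∑ x : Fin D × Fin P, star (d x.1 * q x.2) * (e x.1 * p x.2) := by
      have : star (G.mulVec (fun x => d x.1 * q x.2)) ⬝ᵥ (G.mulVec (fun x => e x.1 * p x.2))
          = star (fun x : Fin D × Fin P => d x.1 * q x.2) ⬝ᵥ (fun x => e x.1 * p x.2) := by
        rw [Matrix.star_mulVec, Matrix.dotProduct_mulVec, Matrix.vecMul_vecMul, hGU,
          Matrix.vecMul_one]
      simpa [dotProduct] using this
    rw [hGq d, hGp e] at h1
    rw [tensor_sum_factor] at h1
    rw [tensor_sum_factor] at h1
    exact h1.symm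
  have keyM : ∀ i j : Fin D,
      (if i = j then (1:ℂ) else 0) * (∑ n, star (q n) * p n)
        = (Uqᴴ * Up) i j * (∑ n, star (q' n) * p' n) := by
    intro i j
    have := key (Pi.single i 1) (Pi.single j 1)
    have hl : ∑ k, star ((Pi.single i 1 : Fin D → ℂ) k) * (Pi.single j 1 : Fin D → ℂ) k
        = (if i = j then (1:ℂ) else 0) := by
      by_cases h : i = j
      · simp [h, Pi.single_apply]
      · simp [h, Pi.single_apply, Ne.symm h]
    have hr : ∑ k, star (Uq.mulVec (Pi.single i 1) k) * (Up.mulVec (Pi.single j 1) k)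
        = (Uqᴴ * Up) i j := by
      simp [Matrix.mulVec_single, Matrix.mul_apply, Matrix.conjTranspose_apply]
    rw [hl, hr] at this
    exact this
  by_cases hS' : (∑ n, star (q' n) * p' n) = 0
  · rcases Nat.eq_zero_or_pos D with hD | hD
    · exfalso
      apply hdiff
      refine ⟨0, ?_⟩
      ext i j
      exact absurd i.2 (by omega)
    · have := keyM ⟨0, hD⟩ ⟨0, hD⟩
      rw [hS'] at this
      simpa using this
  · exfalso
    apply hdiff
    refine ⟨(∑ n, star (q n) * p n) / (∑ n, star (q' n) * p' n), ?_⟩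
    ext i j
    have := keyM i j
    simp only [Matrix.smul_apply, Matrix.one_apply]
    by_cases h : i = j
    · simp only [h, if_true, eq_self_iff_true, one_mul, if_pos rfl, smul_eq_mul, mul_one] at this ⊢
      rw [eq_div_iff hS']
      exact this.symm
    · simp only [h, if_false, if_neg h, zero_mul, smul_zero] at this ⊢
      rcases mul_eq_zero.mp this.symm with h1 | h1
      · exact h1
      · exact absurd h1 hS'
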